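/- Description of the initial echelon of the formal Gabrielov echelon: let < be the lexicographic order on ℕ³ comparing the x-exponent first, then the y-exponent, then the z-exponent, and for nonzero F ∈ ℂ[[x,y,z]] let in(F) denote the <-least exponent in the support of F. Let Î = { a·1 + b·G + c·H : a, b, c ∈ ℂ[[x,y,z]], a and b depending only on x,y }. Then the set of initial exponents { in(F) : F ∈ Î, F ≠ 0 } equals S = { (i,j,0) : i,j ≥ 0 } ∪ { (i,0,k) : i ≥ k ≥ 1 } ∪ { (i,j,k) : i ≥ 0, j ≥ 1, k ≥ 1 }. -/

import Mathlib

noncomputable def G : MvPowerSeries (Fin 3) ℂ :=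
  fun d => if d 0 = 1 ∧ d 1 = 0 ∧ 1 ≤ d 2 then ((Nat.factorial (d 2) : ℂ))⁻¹ else 0

noncomputable def H : MvPowerSeries (Fin 3) ℂ :=
  MvPowerSeries.X 1 * MvPowerSeries.X 2 - MvPowerSeries.X 0

def DependsOnXY (F : MvPowerSeries (Fin 3) ℂ) : Prop :=
  ∀ d : Fin 3 →₀ ℕ, MvPowerSeries.coeff d F ≠ 0 → d 2 = 0

open MvPowerSeries Finset

noncomputable def ex (n m l : ℕ) : Fin 3 →₀ ℕ := Finsupp.equivFunOnFinite.symm ![n, m, l]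

@[simp] lemma ex_apply0 (n m l : ℕ) : ex n m l 0 = n := rfl
@[simp] lemma ex_apply1 (n m l : ℕ) : ex n m l 1 = m := rfl
@[simp] lemma ex_apply2 (n m l : ℕ) : ex n m l 2 = l := rfl

lemma ex_eta (d : Fin 3 →₀ ℕ) : ex (d 0) (d 1) (d 2) = d := by
  ext a
  fin_cases a <;> rfl

lemma ex_add (n m l n' m' l' : ℕ) : ex n m l + ex n' m' l' = ex (n+n') (m+m') (l+l') := by
  ext a
  fin_cases a <;> simp [ex]

lemma ex_eq_iff {n m l n' m' l' : ℕ} : ex n m l = ex n' m' l' ↔ n = n' ∧ m = m' ∧ l = l' := by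
  constructor
  · intro h
    exact ⟨DFunLike.congr_fun h 0, DFunLike.congr_fun h 1, DFunLike.congr_fun h 2⟩
  · rintro ⟨rfl, rfl, rfl⟩; rfl

lemma coeff_G (d : Fin 3 →₀ ℕ) :
    MvPowerSeries.coeff d G = if d 0 = 1 ∧ d 1 = 0 ∧ 1 ≤ d 2 then ((Nat.factorial (d 2) : ℂ))⁻¹ else 0 :=
  rfl

lemma coeff_mul_G {b : MvPowerSeries (Fin 3) ℂ} (hb : DependsOnXY b) (n m l : ℕ) :
    MvPowerSeries.coeff (ex n m l) (b * G) =
      if 1 ≤ n ∧ 1 ≤ l then MvPowerSeries.coeff (ex (n-1) m 0) b * ((Nat.factorial l : ℂ))⁻¹ else 0 := by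
  classical
  rw [MvPowerSeries.coeff_mul]
  have key : ∀ p ∈ Finset.HasAntidiagonal.antidiagonal (ex n m l),
      MvPowerSeries.coeff p.1 b * MvPowerSeries.coeff p.2 G ≠ 0 →
      (1 ≤ n ∧ 1 ≤ l) ∧ p = (ex (n-1) m 0, ex 1 0 l) := by
    intro p hp hne
    rw [Finset.HasAntidiagonal.mem_antidiagonal] at hp
    have h1 : MvPowerSeries.coeff p.1 b ≠ 0 := left_ne_zero_of_mul hne
    have h2 : MvPowerSeries.coeff p.2 G ≠ 0 := right_ne_zero_of_mul hne
    have hz : p.1 2 = 0 := hb _ h1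
    rw [coeff_G] at h2
    by_cases hc : p.2 0 = 1 ∧ p.2 1 = 0 ∧ 1 ≤ p.2 2
    swap
    · rw [if_neg hc] at h2; exact absurd rfl h2
    have e0 : p.1 0 + p.2 0 = n := by
      have := DFunLike.congr_fun hp 0; simpa [Finsupp.add_apply] using this
    have e1 : p.1 1 + p.2 1 = m := by
      have := DFunLike.congr_fun hp 1; simpa [Finsupp.add_apply] using this
    have e2 : p.1 2 + p.2 2 = l := by
      have := DFunLike.congr_fun hp 2; simpa [Finsupp.add_apply] using this
    obtain ⟨hc0, hc1, hc2⟩ := hc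
    refine ⟨⟨by omega, by omega⟩, ?_⟩
    have q1 : p.1 = ex (n-1) m 0 := by
      rw [← ex_eta p.1, ex_eq_iff]
      refine ⟨by omega, by omega, by omega⟩
    have q2 : p.2 = ex 1 0 l := by
      rw [← ex_eta p.2, ex_eq_iff]
      refine ⟨by omega, by omega, by omega⟩
    exact Prod.ext q1 q2
  by_cases h : 1 ≤ n ∧ 1 ≤ l
  · rw [if_pos h]
    rw [Finset.sum_eq_single_of_mem (ex (n-1) m 0, ex 1 0 l)]
    · rw [coeff_G]; simp [h.2]
    · rw [Finset.HasAntidiagonal.mem_antidiagonal, ex_add, ex_eq_iff]; omega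
    · intro p hp hne
      by_contra hc
      exact hne ((key p hp hc).2)
  · rw [if_neg h]
    apply Finset.sum_eq_zero
    intro p hp
    by_contra hc
    exact h (key p hp hc).1

lemma ex_sub_e011 (n m l : ℕ) : ex n m l - ex 0 1 1 = ex n (m-1) (l-1) := by
  ext a
  rw [Finsupp.tsub_apply]
  fin_cases a <;> rfl

lemma ex_sub_e100 (n m l : ℕ) : ex n m l - ex 1 0 0 = ex (n-1) m l := by
  ext a
  rw [Finsupp.tsub_apply]
  fin_cases a <;> rfl

lemma ex_le_iff {n m l n' m' l' : ℕ} : ex n m l ≤ ex n' m' l' ↔ n ≤ n' ∧ m ≤ m' ∧ l ≤ l' := by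
  rw [Finsupp.le_def]
  constructor
  · intro h; exact ⟨h 0, h 1, h 2⟩
  · rintro ⟨h0, h1, h2⟩ a
    fin_cases a <;> assumption

lemma coeff_mul_H (c : MvPowerSeries (Fin 3) ℂ) (n m l : ℕ) :
    MvPowerSeries.coeff (ex n m l) (c * H) =
      (if 1 ≤ m ∧ 1 ≤ l then MvPowerSeries.coeff (ex n (m-1) (l-1)) c else 0)
      - (if 1 ≤ n then MvPowerSeries.coeff (ex (n-1) m l) c else 0) := by
  have h12 : (Finsupp.single (1 : Fin 3) 1 + Finsupp.single 2 1 : Fin 3 →₀ ℕ) = ex 0 1 1 := by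
    ext a; fin_cases a <;> simp [ex, Finsupp.single_apply]
  have h0 : (Finsupp.single (0 : Fin 3) 1 : Fin 3 →₀ ℕ) = ex 1 0 0 := by
    ext a; fin_cases a <;> simp [ex, Finsupp.single_apply]
  have hX12 : (MvPowerSeries.X 1 * MvPowerSeries.X 2 : MvPowerSeries (Fin 3) ℂ)
      = MvPowerSeries.monomial (ex 0 1 1) 1 := by
    rw [MvPowerSeries.X, MvPowerSeries.X, MvPowerSeries.monomial_mul_monomial, one_mul, h12]
  have hX0 : (MvPowerSeries.X 0 : MvPowerSeries (Fin 3) ℂ)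
      = MvPowerSeries.monomial (ex 1 0 0) 1 := by
    rw [MvPowerSeries.X, h0]
  rw [H, mul_sub, map_sub, hX12, hX0, MvPowerSeries.coeff_mul_monomial,
    MvPowerSeries.coeff_mul_monomial]
  congr 1
  · by_cases h : 1 ≤ m ∧ 1 ≤ l
    · rw [if_pos (ex_le_iff.mpr ⟨by omega, by omega, by omega⟩), if_pos h, ex_sub_e011, mul_one]
    · rw [if_neg, if_neg h]
      intro hle
      rw [ex_le_iff] at hle
      omega
  · by_cases h : 1 ≤ n
    · rw [if_pos (ex_le_iff.mpr ⟨by omega, by omega, by omega⟩), if_pos h, ex_sub_e100, mul_one]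
    · rw [if_neg, if_neg h]
      intro hle
      rw [ex_le_iff] at hle
      omega

section master

variable {a b c : MvPowerSeries (Fin 3) ℂ}

lemma coeff_F (ha : DependsOnXY a) (hb : DependsOnXY b) (n m l : ℕ) :
    MvPowerSeries.coeff (ex n m l) (a * 1 + b * G + c * H) =
      (if l = 0 then MvPowerSeries.coeff (ex n m 0) a else 0)
      + (if 1 ≤ n ∧ 1 ≤ l then MvPowerSeries.coeff (ex (n-1) m 0) b * ((Nat.factorial l : ℂ))⁻¹ else 0)
      + ((if 1 ≤ m ∧ 1 ≤ l then MvPowerSeries.coeff (ex n (m-1) (l-1)) c else 0)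
      - (if 1 ≤ n then MvPowerSeries.coeff (ex (n-1) m l) c else 0)) := by
  rw [map_add, map_add, mul_one, coeff_mul_G hb, coeff_mul_H]
  congr 2
  by_cases hl : l = 0
  · subst hl; rw [if_pos rfl]
  · rw [if_neg hl]
    by_contra hne
    exact hl (by simpa using ha _ hne)

lemma coeff_F_L1 (ha : DependsOnXY a) (hb : DependsOnXY b) (n m l : ℕ) :
    MvPowerSeries.coeff (ex (n+1) (m+1) (l+1)) (a * 1 + b * G + c * H) =
      MvPowerSeries.coeff (ex n (m+1) 0) b * ((Nat.factorial (l+1) : ℂ))⁻¹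
      + MvPowerSeries.coeff (ex (n+1) m l) c
      - MvPowerSeries.coeff (ex n (m+1) (l+1)) c := by
  rw [coeff_F ha hb]
  norm_num
  ring

lemma coeff_F_L2 (ha : DependsOnXY a) (hb : DependsOnXY b) (n l : ℕ) :
    MvPowerSeries.coeff (ex (n+1) 0 (l+1)) (a * 1 + b * G + c * H) =
      MvPowerSeries.coeff (ex n 0 0) b * ((Nat.factorial (l+1) : ℂ))⁻¹
      - MvPowerSeries.coeff (ex n 0 (l+1)) c := by
  rw [coeff_F ha hb]
  norm_num
  ring

lemma coeff_F_L3 (ha : DependsOnXY a) (hb : DependsOnXY b) (m l : ℕ) :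
    MvPowerSeries.coeff (ex 0 (m+1) (l+1)) (a * 1 + b * G + c * H) =
      MvPowerSeries.coeff (ex 0 m l) c := by
  rw [coeff_F ha hb]
  norm_num

lemma coeff_F_L4 (ha : DependsOnXY a) (hb : DependsOnXY b) (l : ℕ) :
    MvPowerSeries.coeff (ex 0 0 (l+1)) (a * 1 + b * G + c * H) = 0 := by
  rw [coeff_F ha hb]
  norm_num

lemma coeff_F_L5 (ha : DependsOnXY a) (hb : DependsOnXY b) (n m : ℕ) :
    MvPowerSeries.coeff (ex n m 0) (a * 1 + b * G + c * H) =
      MvPowerSeries.coeff (ex n m 0) a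
      - (if 1 ≤ n then MvPowerSeries.coeff (ex (n-1) m 0) c else 0) := by
  rw [coeff_F ha hb]
  norm_num
  ring

end master

open Polynomial in
lemma fact_prod (l t e : ℕ) (h : t ≤ e) :
    (l+t).factorial * ∏ s ∈ Finset.Ico (t+1) (e+1), (l+s) = (l+e).factorial := by
  induction e with
  | zero =>
      interval_cases t
      simp
  | succ e ih =>
      rcases Nat.lt_or_ge t (e+1) with h' | h'
      · rw [Finset.prod_Ico_succ_top (by omega), ← mul_assoc, ih (by omega)]
        rw [show l + (e+1) = (l+e) + 1 by omega, Nat.factorial_succ]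
        ring
      · have ht : t = e + 1 := by omega
        subst ht
        simp

open Polynomial in
lemma claimD (n : ℕ) (β : ℕ → ℂ)
    (h : ∀ l : ℕ, 1 ≤ l → l ≤ n → ∑ t ∈ Finset.range n, β t * ((Nat.factorial (l + t) : ℂ))⁻¹ = 0) :
    ∀ t, t < n → β t = 0 := by
  rcases Nat.eq_zero_or_pos n with rfl | hn
  · omega
  set p : ℕ → Polynomial ℂ := fun t => ∏ s ∈ Finset.Ico (t+1) n, (Polynomial.X + Polynomial.C (s:ℂ)) with hp
  have hmonic : ∀ t, (p t).Monic := fun t => monic_prod_of_monic _ _ (fun s _ => monic_X_add_C _)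
  have hdeg : ∀ t, (p t).natDegree = n - 1 - t := by
    intro t
    rw [hp]
    rw [natDegree_prod _ _ (fun s _ => X_add_C_ne_zero _)]
    simp only [Polynomial.natDegree_X_add_C, Finset.sum_const, smul_eq_mul, mul_one, Nat.card_Ico]
    omega
  set N : Polynomial ℂ := ∑ t ∈ Finset.range n, Polynomial.C (β t) * p t with hN
  have heval : ∀ l : ℕ, N.eval (l:ℂ) =
      (∑ t ∈ Finset.range n, β t * ((Nat.factorial (l + t) : ℂ))⁻¹) * ((Nat.factorial (l + (n-1)) : ℂ)) := by
    intro l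
    rw [hN, eval_finset_sum, Finset.sum_mul]
    apply Finset.sum_congr rfl
    intro t ht
    rw [Finset.mem_range] at ht
    have hfp := fact_prod l t (n-1) (by omega)
    rw [show n - 1 + 1 = n by omega] at hfp
    have hprod : (p t).eval (l:ℂ) = ∏ s ∈ Finset.Ico (t+1) n, ((l:ℂ) + (s:ℂ)) := by
      rw [hp, eval_prod]
      apply Finset.prod_congr rfl
      intro s _
      simp
    have hcast : ∏ s ∈ Finset.Ico (t+1) n, ((l:ℂ) + (s:ℂ)) =
        ((Nat.factorial (l + (n-1)) : ℂ)) * ((Nat.factorial (l + t) : ℂ))⁻¹ := by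
      have : ((Nat.factorial (l+t) : ℂ)) * ∏ s ∈ Finset.Ico (t+1) n, ((l:ℂ) + (s:ℂ))
          = ((Nat.factorial (l + (n-1)) : ℂ)) := by
        rw [← hfp]
        push_cast
        ring
      have hfne : ((Nat.factorial (l+t) : ℂ)) ≠ 0 := Nat.cast_ne_zero.mpr (Nat.factorial_ne_zero _)
      rw [eq_mul_inv_iff_mul_eq₀ hfne, mul_comm]
      exact this
    rw [eval_mul, eval_C, hprod, hcast]
    ring
  have hNz : N = 0 := by
    apply Polynomial.eq_zero_of_natDegree_lt_card_of_eval_eq_zero N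
      (f := fun i : Fin n => ((i:ℕ) + 1 : ℂ))
    · intro i j hij
      have h1 : ((i:ℕ) : ℂ) = ((j:ℕ) : ℂ) := by
        have h2 : ((i:ℕ) + 1 : ℂ) = ((j:ℕ) + 1 : ℂ) := hij
        exact add_right_cancel h2
      exact Fin.val_injective (Nat.cast_injective h1)
    · intro i
      have := heval ((i:ℕ) + 1)
      rw [h ((i:ℕ)+1) (by omega) (by omega)] at this
      push_cast at this ⊢
      rw [this]
      ring
    · rw [Fintype.card_fin]
      apply Nat.lt_of_le_of_lt (Polynomial.natDegree_sum_le_of_forall_le _ _ ?_) (show n - 1 < n by omega)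
      intro t ht
      apply le_trans (natDegree_C_mul_le _ _)
      rw [hdeg t]
      omega
  have key : ∀ t, t < n → β t = 0 := by
    intro t
    induction t using Nat.strong_induction_on with
    | _ t IH =>
      intro ht
      have hco : N.coeff (n - 1 - t) = 0 := by rw [hNz]; simp
      rw [hN, Polynomial.finset_sum_coeff] at hco
      have hsingle : ∑ u ∈ Finset.range n, (Polynomial.C (β u) * p u).coeff (n - 1 - t) = β t := by
        rw [Finset.sum_eq_single t]
        · rw [Polynomial.coeff_C_mul]
          have : (p t).coeff (n - 1 - t) = 1 := by
            have := (hmonic t).coeff_natDegree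
            rwa [hdeg t] at this
          rw [this, mul_one]
        · intro u hu hut
          rw [Finset.mem_range] at hu
          rcases Nat.lt_or_ge u t with h' | h'
          · simp [IH u h' hu]
          · have hlt : (p u).natDegree < n - 1 - t := by rw [hdeg u]; omega
            rw [Polynomial.coeff_C_mul, coeff_eq_zero_of_natDegree_lt hlt, mul_zero]
        · intro hcon
          exact absurd (Finset.mem_range.mpr ht) hcon
      rw [hsingle] at hco
      exact hco
  exact key

lemma exists_beta (k : ℕ) (hk : 1 ≤ k) :
    ∃ β : ℕ → ℂ, (∀ t, k ≤ t → β t = 0) ∧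
      (∀ l, 1 ≤ l → l < k → ∑ t ∈ Finset.range k, β t * ((Nat.factorial (l + t) : ℂ))⁻¹ = 0) ∧
      (∑ t ∈ Finset.range k, β t * ((Nat.factorial (k + t) : ℂ))⁻¹ ≠ 0) := by
  classical
  set A : Matrix (Fin k) (Fin k) ℂ :=
    Matrix.of (fun l t : Fin k => ((Nat.factorial ((l:ℕ) + 1 + (t:ℕ)) : ℂ))⁻¹) with hA
  have hinj : Function.Injective A.mulVecLin := by
    rw [← LinearMap.ker_eq_bot, LinearMap.ker_eq_bot']
    intro v hv
    set βv : ℕ → ℂ := fun t => if h : t < k then v ⟨t, h⟩ else 0 with hβv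
    have hz : ∀ t, t < k → βv t = 0 := by
      apply claimD k βv
      intro l hl1 hlk
      have hrow := congrFun hv ⟨l - 1, by omega⟩
      rw [Matrix.mulVecLin_apply] at hrow
      simp only [Pi.zero_apply] at hrow
      have : A.mulVec v ⟨l - 1, by omega⟩ = ∑ t : Fin k, A ⟨l-1, by omega⟩ t * v t := by
        rw [Matrix.mulVec]
        rfl
      rw [this] at hrow
      rw [show ∑ t ∈ Finset.range k, βv t * ((Nat.factorial (l + t) : ℂ))⁻¹
          = ∑ t : Fin k, βv (t:ℕ) * ((Nat.factorial (l + (t:ℕ)) : ℂ))⁻¹ by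
        rw [← Fin.sum_univ_eq_sum_range]]
      rw [← hrow]
      apply Finset.sum_congr rfl
      intro t _
      have h1 : βv (t:ℕ) = v t := by
        rw [hβv]
        simp [t.isLt]
      rw [h1, hA]
      have h2 : (l - 1) + 1 + (t:ℕ) = l + (t:ℕ) := by omega
      simp only [Matrix.of_apply]
      rw [h2]
      ring
    funext t
    have := hz (t:ℕ) t.isLt
    rw [hβv] at this
    simpa [t.isLt] using this
  have hsurj : Function.Surjective A.mulVecLin :=
    (LinearMap.injective_iff_surjective).mp hinj
  obtain ⟨v, hv⟩ := hsurj (Pi.single ⟨k-1, by omega⟩ 1)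
  refine ⟨fun t => if h : t < k then v ⟨t, h⟩ else 0, ?_, ?_, ?_⟩
  · intro t ht
    simp [Nat.not_lt.mpr ht]
  · intro l hl1 hlk
    have hrow := congrFun hv ⟨l - 1, by omega⟩
    rw [Matrix.mulVecLin_apply] at hrow
    rw [show A.mulVec v ⟨l - 1, by omega⟩ = ∑ t : Fin k, A ⟨l-1, by omega⟩ t * v t from rfl] at hrow
    rw [← Fin.sum_univ_eq_sum_range (fun t => (if h : t < k then v ⟨t, h⟩ else 0) * ((Nat.factorial (l + t) : ℂ))⁻¹) k]
    have hps : Pi.single (M := fun _ : Fin k => ℂ) ⟨k-1, by omega⟩ 1 ⟨l-1, by omega⟩ = 0 := by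
      rw [Pi.single_apply]
      rw [if_neg]
      intro hcon
      have := congrArg Fin.val hcon
      simp at this
      omega
    rw [hps] at hrow
    rw [← hrow]
    apply Finset.sum_congr rfl
    intro t _
    simp only [t.isLt, dif_pos, hA, Matrix.of_apply]
    rw [show (l - 1) + 1 + (t:ℕ) = l + (t:ℕ) by omega]
    ring
  · have hrow := congrFun hv ⟨k - 1, by omega⟩
    rw [Matrix.mulVecLin_apply] at hrow
    rw [show A.mulVec v ⟨k - 1, by omega⟩ = ∑ t : Fin k, A ⟨k-1, by omega⟩ t * v t from rfl] at hrow
    have hps : Pi.single (M := fun _ : Fin k => ℂ) ⟨k-1, by omega⟩ 1 ⟨k-1, by omega⟩ = 1 := by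
      rw [Pi.single_apply, if_pos rfl]
    rw [hps] at hrow
    rw [← Fin.sum_univ_eq_sum_range (fun t => (if h : t < k then v ⟨t, h⟩ else 0) * ((Nat.factorial (k + t) : ℂ))⁻¹) k]
    rw [show ∑ t : Fin k, (if h : (t:ℕ) < k then v ⟨(t:ℕ), h⟩ else 0) * ((Nat.factorial (k + (t:ℕ)) : ℂ))⁻¹
        = ∑ t : Fin k, A ⟨k-1, by omega⟩ t * v t from ?_]
    · rw [hrow]; exact one_ne_zero
    · apply Finset.sum_congr rfl
      intro t _
      simp only [t.isLt, dif_pos, hA, Matrix.of_apply]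
      rw [show (k - 1) + 1 + (t:ℕ) = k + (t:ℕ) by omega]
      ring

noncomputable def gam (k : ℕ) (β : ℕ → ℂ) (t l : ℕ) : ℂ :=
  -∑ j ∈ Finset.range (k - t), β (t + j) * ((Nat.factorial (l + j + 1) : ℂ))⁻¹

lemma gam_rec (k : ℕ) (β : ℕ → ℂ) (hβ : ∀ t, k ≤ t → β t = 0) (t l : ℕ) :
    gam k β t l = gam k β (t+1) (l+1) - β t * ((Nat.factorial (l+1) : ℂ))⁻¹ := by
  rcases Nat.lt_or_ge t k with h | h
  · rw [gam, gam, show k - t = (k - (t+1)) + 1 by omega, Finset.sum_range_succ', neg_add, sub_eq_add_neg]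
    congr 1
    · rw [neg_inj]
      apply Finset.sum_congr rfl
      intro j _
      rw [show t + (j+1) = t + 1 + j by omega, show l + (j+1) + 1 = l + 1 + j + 1 by omega]
  · rw [gam, gam, show k - t = 0 by omega, show k - (t+1) = 0 by omega, hβ t h]
    simp

lemma gam_top (k : ℕ) (β : ℕ → ℂ) (l : ℕ) : gam k β k l = 0 := by
  rw [gam]
  simp

lemma gam_S (k : ℕ) (β : ℕ → ℂ) (hk : 1 ≤ k) (l : ℕ) :
    β 0 * ((Nat.factorial (l+1) : ℂ))⁻¹ - gam k β 1 (l+1)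
      = ∑ t ∈ Finset.range k, β t * ((Nat.factorial ((l+1) + t) : ℂ))⁻¹ := by
  obtain ⟨e, rfl⟩ : ∃ e, k = e + 1 := ⟨k - 1, by omega⟩
  rw [gam, Finset.sum_range_succ']
  simp only [Nat.add_sub_cancel]
  rw [sub_neg_eq_add, add_comm]
  congr 1
  · apply Finset.sum_congr rfl (fun j _ => ?_)
    rw [show (1:ℕ) + j = j + 1 by omega, show l + 1 + (j+1) = l + 1 + j + 1 by omega]

section constructions

variable (i k : ℕ) (β : ℕ → ℂ)

noncomputable def aS : MvPowerSeries (Fin 3) ℂ :=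
  fun d => if d 2 = 0 ∧ 1 ≤ d 0 ∧ (d 0 - 1) + d 1 = i - 1 ∧ d 1 < k then gam k β (d 1 + 1) 0 else 0

noncomputable def bS : MvPowerSeries (Fin 3) ℂ :=
  fun d => if d 2 = 0 ∧ d 0 + d 1 = i - 1 ∧ d 1 < k then β (d 1) else 0

noncomputable def cS : MvPowerSeries (Fin 3) ℂ :=
  fun d => if d 0 + d 1 = i - 1 ∧ d 1 < k then gam k β (d 1 + 1) (d 2) else 0

lemma coeff_aS (u v w : ℕ) :
    MvPowerSeries.coeff (ex u v w) (aS i k β) =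
      if w = 0 ∧ 1 ≤ u ∧ (u - 1) + v = i - 1 ∧ v < k then gam k β (v + 1) 0 else 0 := rfl

lemma coeff_bS (u v w : ℕ) :
    MvPowerSeries.coeff (ex u v w) (bS i k β) =
      if w = 0 ∧ u + v = i - 1 ∧ v < k then β v else 0 := rfl

lemma coeff_cS (u v w : ℕ) :
    MvPowerSeries.coeff (ex u v w) (cS i k β) =
      if u + v = i - 1 ∧ v < k then gam k β (v + 1) w else 0 := rfl

lemma haS : DependsOnXY (aS i k β) := by
  intro d hd
  by_contra hz
  apply hd
  rw [show d = ex (d 0) (d 1) (d 2) from (ex_eta d).symm, coeff_aS, if_neg]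
  intro hcon
  exact hz hcon.1

lemma hbS : DependsOnXY (bS i k β) := by
  intro d hd
  by_contra hz
  apply hd
  rw [show d = ex (d 0) (d 1) (d 2) from (ex_eta d).symm, coeff_bS, if_neg]
  intro hcon
  exact hz hcon.1

end constructions

def lexLt (d e : Fin 3 →₀ ℕ) : Prop :=
  d 0 < e 0 ∨ (d 0 = e 0 ∧ (d 1 < e 1 ∨ (d 1 = e 1 ∧ d 2 < e 2)))

def IsInit (F : MvPowerSeries (Fin 3) ℂ) (d : Fin 3 →₀ ℕ) : Prop :=
  MvPowerSeries.coeff d F ≠ 0 ∧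
    ∀ d' : Fin 3 →₀ ℕ, MvPowerSeries.coeff d' F ≠ 0 → d = d' ∨ lexLt d d'

def Ihat : Set (MvPowerSeries (Fin 3) ℂ) :=
  {F | ∃ a b c : MvPowerSeries (Fin 3) ℂ,
    DependsOnXY a ∧ DependsOnXY b ∧ F = a * 1 + b * G + c * H}

lemma mem_case2 (i k : ℕ) (hk : 1 ≤ k) (hki : k ≤ i) :
    ∃ F ∈ Ihat, F ≠ 0 ∧ IsInit F (ex i 0 k) := by
  obtain ⟨β, hβ0, hβvan, hβk⟩ := exists_beta k hk
  set S : ℕ → ℂ := fun l => ∑ t ∈ Finset.range k, β t * ((Nat.factorial (l + t) : ℂ))⁻¹ with hS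
  set F : MvPowerSeries (Fin 3) ℂ := aS i k β * 1 + bS i k β * G + cS i k β * H with hF
  have hi : 1 ≤ i := le_trans hk hki
  have hcF : ∀ n m l : ℕ, MvPowerSeries.coeff (ex n m l) F =
      if n = i ∧ m = 0 ∧ 1 ≤ l then S l else 0 := by
    intro n m l
    match n, m, l with
    | n, m, 0 =>
      rw [hF, coeff_F_L5 (haS i k β) (hbS i k β), coeff_aS, coeff_cS,
        if_neg (show ¬(n = i ∧ m = 0 ∧ 1 ≤ 0) by omega)]
      split_ifs <;> first | omega | simp
    | 0, 0, l+1 =>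
      rw [hF, coeff_F_L4 (haS i k β) (hbS i k β), if_neg (by omega)]
    | 0, m'+1, l+1 =>
      rw [hF, coeff_F_L3 (haS i k β) (hbS i k β), coeff_cS,
        if_neg (show ¬((0:ℕ) = i ∧ m' + 1 = 0 ∧ 1 ≤ l + 1) by omega)]
      by_cases hc : 0 + m' = i - 1 ∧ m' < k
      · rw [if_pos hc, show m' + 1 = k by omega, gam_top]
      · rw [if_neg hc]
    | n'+1, 0, l+1 =>
      rw [hF, coeff_F_L2 (haS i k β) (hbS i k β), coeff_bS, coeff_cS]
      by_cases hc : n' = i - 1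
      · rw [if_pos (show (0:ℕ) = 0 ∧ n' + 0 = i - 1 ∧ 0 < k by omega),
          if_pos (show n' + 0 = i - 1 ∧ 0 < k by omega),
          if_pos (show n' + 1 = i ∧ (0:ℕ) = 0 ∧ 1 ≤ l + 1 by omega)]
        exact gam_S k β hk l
      · rw [if_neg (by omega), if_neg (by omega), if_neg (by omega)]
        simp
    | n'+1, m'+1, l+1 =>
      rw [hF, coeff_F_L1 (haS i k β) (hbS i k β), coeff_bS, coeff_cS, coeff_cS,
        if_neg (show ¬(n' + 1 = i ∧ m' + 1 = 0 ∧ 1 ≤ l + 1) by omega)]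
      by_cases hP : n' + (m' + 1) = i - 1
      · by_cases hm : m' + 1 < k
        · rw [if_pos (show (0:ℕ) = 0 ∧ n' + (m'+1) = i - 1 ∧ m' + 1 < k by omega),
            if_pos (show (n'+1) + m' = i - 1 ∧ m' < k by omega),
            if_pos (show n' + (m'+1) = i - 1 ∧ m' + 1 < k by omega)]
          rw [gam_rec k β hβ0 (m'+1) l]
          rw [show m' + 1 + 1 = m' + 2 by omega]
          ring
        · rcases Nat.lt_or_ge m' k with hm2 | hm2
          · have hmk : m' + 1 = k := by omega
            rw [if_neg (by omega), if_pos (show (n'+1) + m' = i - 1 ∧ m' < k by omega),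
              if_neg (by omega)]
            rw [show m' + 1 = k from hmk, gam_top]
            ring
          · rw [if_neg (by omega), if_neg (by omega), if_neg (by omega)]
            ring
      · rw [if_neg (by omega), if_neg (by omega), if_neg (by omega)]
        ring
  have hne : MvPowerSeries.coeff (ex i 0 k) F ≠ 0 := by
    rw [hcF i 0 k, if_pos ⟨rfl, rfl, hk⟩]
    exact hβk
  refine ⟨F, ⟨aS i k β, bS i k β, cS i k β, haS i k β, hbS i k β, hF⟩, ?_, hne, ?_⟩
  · intro h0
    rw [h0] at hne
    simp at hne
  · intro d' hd'
    rw [← ex_eta d', hcF (d' 0) (d' 1) (d' 2)] at hd'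
    by_cases hc : d' 0 = i ∧ d' 1 = 0 ∧ 1 ≤ d' 2
    swap
    · rw [if_neg hc] at hd'
      exact absurd rfl hd'
    rw [if_pos hc] at hd'
    have hlk : k ≤ d' 2 := by
      by_contra hlt
      exact hd' (hβvan (d' 2) hc.2.2 (by omega))
    rcases Nat.eq_or_lt_of_le hlk with heq | hgt
    · left
      rw [← ex_eta d', ex_eq_iff]
      exact ⟨hc.1.symm, hc.2.1.symm, heq⟩
    · right
      unfold lexLt
      simp only [ex_apply0, ex_apply1, ex_apply2]
      omega

lemma mem_case1 (i j : ℕ) : ∃ F ∈ Ihat, F ≠ 0 ∧ IsInit F (ex i j 0) := by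
  set F : MvPowerSeries (Fin 3) ℂ := MvPowerSeries.monomial (ex i j 0) 1 with hF
  have hco : ∀ d, MvPowerSeries.coeff d F = if d = ex i j 0 then 1 else 0 := by
    intro d
    rw [hF, MvPowerSeries.coeff_monomial]
  have hdep : DependsOnXY F := by
    intro d hd
    rw [hco] at hd
    by_cases hde : d = ex i j 0
    · rw [hde]; rfl
    · rw [if_neg hde] at hd; exact absurd rfl hd
  have hco1 : MvPowerSeries.coeff (ex i j 0) F = 1 := by rw [hco, if_pos rfl]
  refine ⟨F, ⟨F, 0, 0, hdep, fun d hd => absurd (by simp) hd, by simp⟩, ?_, ?_, ?_⟩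
  · intro h0
    rw [h0, map_zero] at hco1
    exact zero_ne_one hco1
  · rw [hco1]; exact one_ne_zero
  · intro d' hd'
    rw [hco] at hd'
    by_cases hde : d' = ex i j 0
    · left; exact hde.symm
    · rw [if_neg hde] at hd'; exact absurd rfl hd'

lemma mem_case3 (i j k : ℕ) : ∃ F ∈ Ihat, F ≠ 0 ∧ IsInit F (ex i (j+1) (k+1)) := by
  set c0 : MvPowerSeries (Fin 3) ℂ := MvPowerSeries.monomial (ex i j k) 1 with hc0
  set F : MvPowerSeries (Fin 3) ℂ := (0 : MvPowerSeries (Fin 3) ℂ) * 1 + 0 * G + c0 * H with hF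
  have hFc : F = c0 * H := by rw [hF]; ring
  have hco : ∀ n m l : ℕ, MvPowerSeries.coeff (ex n m l) F =
      (if 1 ≤ m ∧ 1 ≤ l then (if ex n (m-1) (l-1) = ex i j k then (1:ℂ) else 0) else 0)
      - (if 1 ≤ n then (if ex (n-1) m l = ex i j k then (1:ℂ) else 0) else 0) := by
    intro n m l
    rw [hFc, coeff_mul_H, hc0, MvPowerSeries.coeff_monomial, MvPowerSeries.coeff_monomial]
  have hco1 : MvPowerSeries.coeff (ex i (j+1) (k+1)) F = 1 := by
    rw [hco]
    rw [if_pos ⟨by omega, by omega⟩, if_pos (by rw [ex_eq_iff]; omega)]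
    by_cases hn : 1 ≤ i
    · rw [if_pos hn, if_neg (by rw [ex_eq_iff]; omega)]; ring
    · rw [if_neg hn]; ring
  have hzero : DependsOnXY (0 : MvPowerSeries (Fin 3) ℂ) := fun d hd => absurd (by simp) hd
  refine ⟨F, ⟨0, 0, c0, hzero, hzero, hF⟩, ?_, ?_, ?_⟩
  · intro h0
    rw [h0, map_zero] at hco1
    exact zero_ne_one hco1
  · rw [hco1]; exact one_ne_zero
  · intro d' hd'
    rw [← ex_eta d', hco] at hd'
    set n := d' 0; set m := d' 1; set l := d' 2
    by_cases hA : 1 ≤ m ∧ 1 ≤ l ∧ ex n (m-1) (l-1) = ex i j k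
    · left
      rw [← ex_eta d', ex_eq_iff]
      obtain ⟨e0, e1, e2⟩ := ex_eq_iff.mp hA.2.2
      omega
    · have hAz : (if 1 ≤ m ∧ 1 ≤ l then (if ex n (m-1) (l-1) = ex i j k then (1:ℂ) else 0) else 0) = 0 := by
        by_cases hml : 1 ≤ m ∧ 1 ≤ l
        · rw [if_pos hml, if_neg (fun hc => hA ⟨hml.1, hml.2, hc⟩)]
        · rw [if_neg hml]
      rw [hAz, zero_sub, neg_ne_zero] at hd'
      have hn1 : 1 ≤ n := by
        by_contra hn
        rw [if_neg hn] at hd'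
        exact hd' rfl
      rw [if_pos hn1] at hd'
      have heq2 : ex (n-1) m l = ex i j k := by
        by_contra hc
        rw [if_neg hc] at hd'
        exact hd' rfl
      obtain ⟨e0, e1, e2⟩ := ex_eq_iff.mp heq2
      right
      unfold lexLt
      simp only [ex_apply0, ex_apply1, ex_apply2]
      omega

lemma hard_dir (a b c : MvPowerSeries (Fin 3) ℂ) (ha : DependsOnXY a) (hb : DependsOnXY b)
    (d : Fin 3 →₀ ℕ) (hinit : IsInit (a * 1 + b * G + c * H) d) (hd1 : d 1 = 0) (hd2 : 1 ≤ d 2) :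
    d 2 ≤ d 0 := by
  set F := a * 1 + b * G + c * H with hF
  obtain ⟨hne, hmin⟩ := hinit
  by_contra hcon
  push_neg at hcon
  have hvan : ∀ n m l : ℕ, (n < d 0 ∨ (n = d 0 ∧ m = 0 ∧ l < d 2)) →
      MvPowerSeries.coeff (ex n m l) F = 0 := by
    intro n m l hless
    by_contra hnz
    rcases hmin (ex n m l) hnz with heq | hlt
    · have h0 := DFunLike.congr_fun heq 0
      have h1' := DFunLike.congr_fun heq 1
      have h2' := DFunLike.congr_fun heq 2
      simp only [ex_apply0, ex_apply1, ex_apply2] at h0 h1' h2'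
      omega
    · unfold lexLt at hlt
      simp only [ex_apply0, ex_apply1, ex_apply2] at hlt
      omega
  have hdF : MvPowerSeries.coeff (ex (d 0) 0 (d 2)) F ≠ 0 := by
    rw [show ex (d 0) 0 (d 2) = d by rw [← hd1]; exact ex_eta d]
    exact hne
  rcases Nat.eq_zero_or_pos (d 0) with hi0 | hi1
  · apply hdF
    rw [hi0, show d 2 = (d 2 - 1) + 1 by omega]
    exact coeff_F_L4 ha hb _
  set i := d 0 with hidef
  set B' : ℕ → ℂ := fun u => MvPowerSeries.coeff (ex u (i-1-u) 0) b with hB'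
  set Γ : ℕ → ℕ → ℂ := fun u l => MvPowerSeries.coeff (ex u (i-1-u) l) c with hΓ
  have h0 : ∀ l, Γ 0 l = 0 := by
    intro l
    have hv := hvan 0 ((i-1)+1) (l+1) (Or.inl (by omega))
    rw [coeff_F_L3 ha hb] at hv
    exact hv
  have hrec : ∀ u l, u + 2 ≤ i →
      Γ (u+1) l = Γ u (l+1) - B' u * ((Nat.factorial (l+1) : ℂ))⁻¹ := by
    intro u l hu
    have hv := hvan (u+1) ((i-2-u)+1) (l+1) (Or.inl (by omega))
    rw [coeff_F_L1 ha hb] at hv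
    have e1 : Γ (u+1) l = MvPowerSeries.coeff (ex (u+1) (i-2-u) l) c := by
      simp only [hΓ]
      rw [show i - 1 - (u+1) = i - 2 - u by omega]
    have e2 : Γ u (l+1) = MvPowerSeries.coeff (ex u ((i-2-u)+1) (l+1)) c := by
      simp only [hΓ]
      rw [show i - 1 - u = (i-2-u) + 1 by omega]
    have e3 : B' u = MvPowerSeries.coeff (ex u ((i-2-u)+1) 0) b := by
      simp only [hB']
      rw [show i - 1 - u = (i-2-u) + 1 by omega]
    rw [e1, e2, e3]
    linear_combination hv
  have hclosed : ∀ u, u ≤ i - 1 → ∀ l,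
      Γ u l = -∑ j ∈ Finset.range u, B' (u-1-j) * ((Nat.factorial (l+j+1) : ℂ))⁻¹ := by
    intro u
    induction u with
    | zero => intro _ l; simp [h0 l]
    | succ u IH =>
      intro hu l
      rw [hrec u l (by omega), IH (by omega) (l+1), Finset.sum_range_succ', neg_add,
        sub_eq_add_neg]
      congr 1
      · rw [neg_inj]
        apply Finset.sum_congr rfl
        intro j _
        rw [show u + 1 - 1 - (j+1) = u - 1 - j by omega,
          show l + (j+1) + 1 = l + 1 + j + 1 by omega]
  have hSl : ∀ l, MvPowerSeries.coeff (ex i 0 (l+1)) F =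
      ∑ t ∈ Finset.range i, B' (i-1-t) * ((Nat.factorial ((l+1) + t) : ℂ))⁻¹ := by
    intro l
    have hv : MvPowerSeries.coeff (ex ((i-1)+1) 0 (l+1)) F =
        MvPowerSeries.coeff (ex (i-1) 0 0) b * ((Nat.factorial (l+1) : ℂ))⁻¹
          - MvPowerSeries.coeff (ex (i-1) 0 (l+1)) c := coeff_F_L2 ha hb _ _
    rw [show (i-1)+1 = i by omega] at hv
    have e1 : MvPowerSeries.coeff (ex (i-1) 0 0) b = B' (i-1) := by
      simp only [hB']
      rw [show i - 1 - (i-1) = 0 by omega]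
    have e2 : MvPowerSeries.coeff (ex (i-1) 0 (l+1)) c = Γ (i-1) (l+1) := by
      simp only [hΓ]
      rw [show i - 1 - (i-1) = 0 by omega]
    rw [hv, e1, e2, hclosed (i-1) le_rfl (l+1)]
    rw [show i = (i-1)+1 by omega, Finset.sum_range_succ']
    rw [show (i-1)+1 = i by omega]
    rw [sub_neg_eq_add, add_comm]
    congr 1
    · apply Finset.sum_congr rfl
      intro j _
      rw [show i - 1 - (j+1) = i - 1 - 1 - j by omega,
        show l + 1 + (j+1) = l + 1 + j + 1 by omega]
  have hBz : ∀ t, t < i → B' (i-1-t) = 0 := by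
    apply claimD i (fun t => B' (i-1-t))
    intro l hl1 hli
    have hv := hvan i 0 l (Or.inr ⟨rfl, rfl, by omega⟩)
    rw [show l = (l-1)+1 by omega] at hv ⊢
    rw [← hSl (l-1)]
    exact hv
  apply hdF
  rw [show d 2 = (d 2 - 1) + 1 by omega, hSl (d 2 - 1)]
  apply Finset.sum_eq_zero
  intro t ht
  rw [hBz t (Finset.mem_range.mp ht), zero_mul]

theorem gabrielov_initial_echelon :
    {d : Fin 3 →₀ ℕ | ∃ F ∈ Ihat, F ≠ 0 ∧ IsInit F d} =
    {d : Fin 3 →₀ ℕ | d 2 = 0 ∨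
      (d 1 = 0 ∧ 1 ≤ d 2 ∧ d 2 ≤ d 0) ∨
      (1 ≤ d 1 ∧ 1 ≤ d 2)} := by
  ext d
  simp only [Set.mem_setOf_eq]
  constructor
  · rintro ⟨F, ⟨a, b, c, ha, hb, rfl⟩, hF0, hinit⟩
    by_cases h2 : d 2 = 0
    · exact Or.inl h2
    by_cases h1 : d 1 = 0
    · exact Or.inr (Or.inl ⟨h1, by omega, hard_dir a b c ha hb d hinit h1 (by omega)⟩)
    · exact Or.inr (Or.inr ⟨by omega, by omega⟩)
  · rintro (h | h | h)
    · obtain ⟨F, hmem, hF0, hinit⟩ := mem_case1 (d 0) (d 1)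
      refine ⟨F, hmem, hF0, ?_⟩
      rwa [show ex (d 0) (d 1) 0 = d by rw [← h]; exact ex_eta d] at hinit
    · obtain ⟨F, hmem, hF0, hinit⟩ := mem_case2 (d 0) (d 2) h.2.1 h.2.2
      refine ⟨F, hmem, hF0, ?_⟩
      rwa [show ex (d 0) 0 (d 2) = d by rw [← h.1]; exact ex_eta d] at hinit
    · obtain ⟨F, hmem, hF0, hinit⟩ := mem_case3 (d 0) (d 1 - 1) (d 2 - 1)
      refine ⟨F, hmem, hF0, ?_⟩
      rwa [show ex (d 0) ((d 1 - 1)+1) ((d 2 - 1)+1) = d by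
        rw [show (d 1 - 1)+1 = d 1 by omega, show (d 2 - 1)+1 = d 2 by omega]
        exact ex_eta d] at hinit
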